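/- Let V satisfy the basic assumptions with decay exponent a > 3/2. Then σ^∞ ∈ ℓ²(ℕ); for every n ≥ 2 and every i ≥ 1 one has 0 ≤ σ^n(i) ≤ σ^∞(i); and σ^n → σ^∞ in ℓ²(ℕ) as n → ∞. -/

import Mathlib

open Filter Set MeasureTheory
open scoped Classical ENNReal NNReal BigOperators

noncomputable section

/-- `lam V x` is λ(x) := inf_{(0,x)} V''. -/
def lam (V : ℝ → ℝ) (x : ℝ) : ℝ :=
  sInf (deriv (deriv V) '' Set.Ioo 0 x)

/-- The basic assumptions (Reg), (Sing), (Cvx), (Dec) on the interaction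
potential `V`, with decay exponent `a`. -/
structure BasicAssumptions (V : ℝ → ℝ) (a : ℝ) : Prop where
  nonneg : ∀ x : ℝ, 0 ≤ V x
  even : ∀ x : ℝ, V (-x) = V x
  pos : ∀ x : ℝ, x ≠ 0 → 0 < V x
  smooth : ContDiffOn ℝ 2 V {(0 : ℝ)}ᶜ
  sing : Filter.Tendsto V (nhdsWithin 0 {(0 : ℝ)}ᶜ) Filter.atTop
  cvx : ∀ x : ℝ, 0 < x → 0 < lam V x
  decV : Filter.Tendsto V Filter.atTop (nhds 0)
  decV' : Filter.Tendsto (deriv V) Filter.atTop (nhds 0)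
  one_lt_a : 1 < a
  decV'' : ∀ δ : ℝ, 0 < δ → ∃ c : ℝ, 0 < c ∧
    ∀ x : ℝ, δ ≤ |x| → deriv (deriv V) x ≤ c * |x| ^ (-(a + 2))

/-- The configuration space 𝒟_n. -/
def Dn (n : ℕ) : Set (Fin (n + 1) → ℝ) :=
  {x | x 0 = 0 ∧ x (Fin.last n) = 1 ∧ Monotone x}

/-- The energy E_n(x) := (1/n) Σ_{k=1}^{n} Σ_{j=0}^{n−k} V(n[x(j+k) − x(j)]),
valued in [0,∞], with the convention V(0) = +∞ from (Sing).  The double sum is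
written as a sum over all pairs q < p. -/
def En (V : ℝ → ℝ) (n : ℕ) (x : Fin (n + 1) → ℝ) : ℝ≥0∞ :=
  ENNReal.ofReal (1 / (n : ℝ)) *
    ∑ p : Fin (n + 1), ∑ q : Fin (n + 1),
      if (q : ℕ) < (p : ℕ) then
        (if x p = x q then ⊤ else ENNReal.ofReal (V ((n : ℝ) * (x p - x q))))
      else 0

/-- The first-order Taylor remainder φ_k(y) := V(k+y) − V(k) − V'(k)y. -/
def phi (V : ℝ → ℝ) (k y : ℝ) : ℝ :=
  V (k + y) - V k - deriv V k * y

/-- The lower-bound function Φ_k. -/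
def PhiLB (V : ℝ → ℝ) (k y : ℝ) : ℝ :=
  if y ≤ 1 then 1 / 2 * lam V (k + 1) * y ^ 2 else lam V (k + 1) * (y - 1 / 2)

/-- σ^n(i) := Σ_{k=i+1}^{n−i} min(k−i, n−i+1−k)|V'(k)| for 1 ≤ i ≤ ⌊n/2⌋,
and 0 otherwise. -/
def sigman (V : ℝ → ℝ) (n i : ℕ) : ℝ :=
  if 1 ≤ i ∧ i ≤ n / 2 then
    ∑ k ∈ Finset.Icc (i + 1) (n - i),
      ((min (k - i) (n + 1 - i - k) : ℕ) : ℝ) * |deriv V (k : ℝ)|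
  else 0

/-- σ^∞(i) := Σ_{k=i+1}^∞ (k−i)|V'(k)| for i ≥ 1 (index 0 is inert). -/
def sigmaInf (V : ℝ → ℝ) (i : ℕ) : ℝ :=
  if i = 0 then 0
  else ∑' m : ℕ, ((m + 1 : ℕ) : ℝ) * |deriv V ((i + 1 + m : ℕ) : ℝ)|

/-- Dom E_n^1 := {ε ∈ ℝ^n : −1 ≤ ε(i) ≤ n, Σ_{i=1}^n ε(i) = 0}, regarded as a
subset of ℓ²(ℕ) by extension by zero. -/
def DomEn1 (n : ℕ) : Set (ℕ → ℝ) :=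
  {ε | (∀ i, 1 ≤ i → i ≤ n → -1 ≤ ε i ∧ ε i ≤ (n : ℝ)) ∧
    (∀ i, i = 0 ∨ n < i → ε i = 0) ∧
    (∑ i ∈ Finset.Icc 1 n, ε i) = 0}

/-- The renormalised energy
E_n^1(ε) := Σ_{k=1}^{n} Σ_{j=0}^{n−k} [V(k + Σ_{l=j+1}^{j+k} ε(l)) − V(k)]. -/
def En1 (V : ℝ → ℝ) (n : ℕ) (ε : ℕ → ℝ) : ℝ :=
  ∑ k ∈ Finset.Icc 1 n, ∑ j ∈ Finset.range (n - k + 1),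
    (V ((k : ℝ) + ∑ l ∈ Finset.Icc (j + 1) (j + k), ε l) - V (k : ℝ))

/-- The quadratic-type part Q_n(ε) := Σ_{k=1}^{n} Σ_{j=0}^{n−k} φ_k(Σ_{l=j+1}^{k+j} ε(l)). -/
def Qn (V : ℝ → ℝ) (n : ℕ) (ε : ℕ → ℝ) : ℝ :=
  ∑ k ∈ Finset.Icc 1 n, ∑ j ∈ Finset.range (n - k + 1),
    phi V (k : ℝ) (∑ l ∈ Finset.Icc (j + 1) (j + k), ε l)

/-- The half truncation ε^{n,1/2}(i) := ε(i) for 1 ≤ i ≤ ⌈n/2⌉ and 0 otherwise. -/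
def half (n : ℕ) (ε : ℕ → ℝ) (i : ℕ) : ℝ :=
  if 1 ≤ i ∧ i ≤ (n + 1) / 2 then ε i else 0

/-- The reversal ε⃖(i) := ε(n+1−i) for 1 ≤ i ≤ n, extended by zero. -/
def rev (n : ℕ) (ε : ℕ → ℝ) (i : ℕ) : ℝ :=
  if 1 ≤ i ∧ i ≤ n then ε (n + 1 - i) else 0

/-- Dom E_∞^l := {ε ∈ ℓ²(ℕ) : ε(i) ≥ −1 for all i ≥ 1} (index 0 is inert). -/
def DomEinfl : Set (ℕ → ℝ) :=
  {ε | Summable (fun i => ε i ^ 2) ∧ ε 0 = 0 ∧ ∀ i, 1 ≤ i → -1 ≤ ε i}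

/-- Q_∞(ε) := Σ_{k=1}^∞ Σ_{j=0}^∞ φ_k(Σ_{l=j+1}^{k+j} ε(l)), valued in [0,∞]
(the summands are nonnegative). -/
def Qinf (V : ℝ → ℝ) (ε : ℕ → ℝ) : ℝ≥0∞ :=
  ∑' (k : ℕ) (j : ℕ),
    ENNReal.ofReal (phi V ((k : ℝ) + 1) (∑ l ∈ Finset.Icc (j + 1) (j + k + 1), ε l))

/-- The linear term (σ^∞, ε)_{ℓ²(ℕ)} as an extended real (difference of the
sums of the positive and negative parts). -/
def linPart (V : ℝ → ℝ) (ε : ℕ → ℝ) : EReal :=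
  ((∑' i : ℕ, ENNReal.ofReal (sigmaInf V i * ε i) : ℝ≥0∞) : EReal) -
    ((∑' i : ℕ, ENNReal.ofReal (-(sigmaInf V i * ε i)) : ℝ≥0∞) : EReal)

/-- The limit boundary-layer energy E_∞^l(ε) := Q_∞(ε) + (σ^∞, ε), valued in
the extended reals. -/
def Einfl (V : ℝ → ℝ) (ε : ℕ → ℝ) : EReal :=
  (Qinf V ε : EReal) + linPart V ε

end


open Topology in
private lemma aux_hasDeriv (s : ℝ) (hs : 0 < s) {t : ℝ} (ht : 0 < t) :
    HasDerivAt (fun u : ℝ => u ^ (-s) / s) (-(t ^ (-(s + 1)))) t := by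
  have h := (Real.hasDerivAt_rpow_const (x := t) (p := -s) (Or.inl ht.ne')).div_const s
  rwa [show -s - 1 = -(s + 1) by ring, neg_mul, neg_div, mul_div_cancel_left₀ _ hs.ne'] at h

private lemma aux_step (s : ℝ) (hs : 0 < s) {b : ℝ} (hb : 0 < b) :
    (b + 1) ^ (-(s + 1)) ≤ b ^ (-s) / s - (b + 1) ^ (-s) / s := by
  have hlt : b < b + 1 := by linarith
  set f : ℝ → ℝ := fun u => u ^ (-s) / s with hf
  have hcont : ContinuousOn f (Set.Icc b (b + 1)) := fun u hu =>
    ((aux_hasDeriv s hs (lt_of_lt_of_le hb hu.1)).continuousAt).continuousWithinAt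
  have hdiff : DifferentiableOn ℝ f (Set.Ioo b (b + 1)) := fun u hu =>
    ((aux_hasDeriv s hs (hb.trans hu.1)).differentiableAt).differentiableWithinAt
  obtain ⟨ξ, hξ, hderiv⟩ := exists_deriv_eq_slope f hlt hcont hdiff
  have hξpos : 0 < ξ := hb.trans hξ.1
  have hd : deriv f ξ = -(ξ ^ (-(s + 1))) := (aux_hasDeriv s hs hξpos).deriv
  rw [hd] at hderiv
  have hden : b + 1 - b = 1 := by ring
  rw [hden, div_one] at hderiv
  have h1 : f b - f (b + 1) = ξ ^ (-(s + 1)) := by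
    have := hderiv
    simp only [hf] at this ⊢
    linarith
  have h2 : (b + 1) ^ (-(s + 1)) ≤ ξ ^ (-(s + 1)) :=
    Real.rpow_le_rpow_of_nonpos hξpos hξ.2.le (by linarith)
  calc (b + 1) ^ (-(s + 1)) ≤ ξ ^ (-(s + 1)) := h2
    _ = b ^ (-s) / s - (b + 1) ^ (-s) / s := h1.symm

private lemma aux_tail (s : ℝ) (hs : 0 < s) {x : ℝ} (hx : 0 < x) (N : ℕ) :
    ∑ j ∈ Finset.range N, (x + j + 1) ^ (-(s + 1)) ≤ x ^ (-s) / s := by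
  set g : ℕ → ℝ := fun j => (x + j) ^ (-s) / s with hg
  have key : ∀ j ∈ Finset.range N, (x + j + 1) ^ (-(s + 1)) ≤ g j - g (j + 1) := by
    intro j _
    have h := aux_step s hs (b := x + j) (by positivity)
    have e2 : g (j + 1) = (x + (j : ℝ) + 1) ^ (-s) / s := by
      simp only [hg]; push_cast; ring_nf
    rw [e2]
    simpa using h
  calc ∑ j ∈ Finset.range N, (x + j + 1) ^ (-(s + 1))
      ≤ ∑ j ∈ Finset.range N, (g j - g (j + 1)) := Finset.sum_le_sum key
    _ = g 0 - g N := Finset.sum_range_sub' g N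
    _ ≤ g 0 := by
        have : 0 ≤ g N := by simp only [hg]; positivity
        linarith
    _ = x ^ (-s) / s := by simp [hg]

private lemma Vpp_pos (V : ℝ → ℝ) (a : ℝ) (h : BasicAssumptions V a) {y : ℝ} (hy : 0 < y) :
    0 < deriv (deriv V) y := by
  have hc := h.cvx (y + 1) (by linarith)
  refine lt_of_lt_of_le hc ?_
  show lam V (y + 1) ≤ _
  rw [lam]
  by_cases hb : BddBelow (deriv (deriv V) '' Set.Ioo 0 (y + 1))
  · exact csInf_le hb ⟨y, ⟨hy, by linarith⟩, rfl⟩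
  · exfalso
    rw [lam, csInf_of_not_bddBelow hb, Real.sInf_empty] at hc
    exact lt_irrefl 0 hc

private lemma Vp_diffAt (V : ℝ → ℝ) (a : ℝ) (h : BasicAssumptions V a) {y : ℝ} (hy : y ≠ 0) :
    DifferentiableAt ℝ (deriv V) y := by
  have hc1 : ContDiffOn ℝ 1 (deriv V) {(0 : ℝ)}ᶜ :=
    h.smooth.deriv_of_isOpen isOpen_compl_singleton (by norm_num)
  exact (hc1.differentiableOn one_ne_zero).differentiableAt (isOpen_compl_singleton.mem_nhds hy)

private lemma Vp_mono (V : ℝ → ℝ) (a : ℝ) (h : BasicAssumptions V a) :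
    StrictMonoOn (deriv V) (Set.Ioi 0) := by
  apply strictMonoOn_of_deriv_pos (convex_Ioi 0)
  · intro y hy
    exact (Vp_diffAt V a h (ne_of_gt hy)).continuousAt.continuousWithinAt
  · intro y hy
    rw [interior_Ioi] at hy
    exact Vpp_pos V a h hy

private lemma Vp_nonpos (V : ℝ → ℝ) (a : ℝ) (h : BasicAssumptions V a) {y : ℝ} (hy : 0 < y) :
    deriv V y ≤ 0 := by
  refine ge_of_tendsto h.decV' ?_
  filter_upwards [eventually_ge_atTop (y + 1)] with z hz
  exact ((Vp_mono V a h) (mem_Ioi.2 hy) (mem_Ioi.2 (by linarith)) (by linarith)).le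

open Topology in
private lemma Vp_bound (V : ℝ → ℝ) (a : ℝ) (h : BasicAssumptions V a) :
    ∃ C : ℝ, 0 < C ∧ ∀ x : ℝ, 1 ≤ x → |deriv V x| ≤ C * x ^ (-(a + 1)) := by
  obtain ⟨c, hc, hdec⟩ := h.decV'' 1 one_pos
  have ha1 : (0 : ℝ) < a + 1 := by linarith [h.one_lt_a]
  refine ⟨c * (1 + 1 / (a + 1)), by positivity, fun x hx => ?_⟩
  have hx0 : 0 < x := lt_of_lt_of_le one_pos hx
  set g : ℕ → ℝ := fun j => deriv V (x + j) with hg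
  have hterm : ∀ j : ℕ, g (j + 1) - g j ≤ c * (x + j) ^ (-(a + 2)) := by
    intro j
    have hbj : (0 : ℝ) < x + j := by positivity
    have hcont : ContinuousOn (deriv V) (Set.Icc (x + j) (x + j + 1)) := fun u hu =>
      (Vp_diffAt V a h (lt_of_lt_of_le hbj hu.1).ne').continuousAt.continuousWithinAt
    have hdiff : DifferentiableOn ℝ (deriv V) (Set.Ioo (x + j) (x + j + 1)) := fun u hu =>
      (Vp_diffAt V a h (hbj.trans hu.1).ne').differentiableWithinAt
    obtain ⟨ξ, hξ, hd⟩ := exists_deriv_eq_slope (deriv V)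
      (by linarith : x + j < x + j + 1) hcont hdiff
    have hξpos : 0 < ξ := hbj.trans hξ.1
    have hslope : deriv (deriv V) ξ = g (j + 1) - g j := by
      rw [hd]
      have e : x + (j : ℝ) + 1 - (x + (j : ℝ)) = 1 := by ring
      rw [e, div_one]
      simp only [hg]
      congr 2
      push_cast
      ring
    have hub : deriv (deriv V) ξ ≤ c * ξ ^ (-(a + 2)) := by
      have hξ1 : 1 ≤ ξ := by
        have := hξ.1
        have hj : (0 : ℝ) ≤ (j : ℝ) := Nat.cast_nonneg j
        linarith
      have h1 := hdec ξ (by rw [abs_of_pos hξpos]; exact hξ1)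
      rwa [abs_of_pos hξpos] at h1
    have h2 : ξ ^ (-(a + 2)) ≤ (x + j) ^ (-(a + 2)) :=
      Real.rpow_le_rpow_of_nonpos hbj hξ.1.le (by linarith)
    calc g (j + 1) - g j = deriv (deriv V) ξ := hslope.symm
      _ ≤ c * ξ ^ (-(a + 2)) := hub
      _ ≤ c * (x + j) ^ (-(a + 2)) := by nlinarith
  have hsum : ∀ N : ℕ, ∑ j ∈ Finset.range N, (x + j) ^ (-(a + 2)) ≤
      x ^ (-(a + 1)) + x ^ (-(a + 1)) / (a + 1) := by
    intro N
    have hx2 : x ^ (-(a + 2)) ≤ x ^ (-(a + 1)) :=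
      Real.rpow_le_rpow_of_exponent_le hx (by linarith)
    have hxp : (0 : ℝ) ≤ x ^ (-(a + 1)) := Real.rpow_nonneg hx0.le _
    cases N with
    | zero => simp; positivity
    | succ M =>
      rw [Finset.sum_range_succ']
      have htail := aux_tail (a + 1) ha1 hx0 M
      simp only [show -(a + 1 + 1) = -(a + 2) from by ring] at htail
      have hcong : (∑ j ∈ Finset.range M, (x + ((j + 1 : ℕ) : ℝ)) ^ (-(a + 2))) =
          ∑ j ∈ Finset.range M, (x + j + 1) ^ (-(a + 2)) :=
        Finset.sum_congr rfl fun j _ => by push_cast; ring_nf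
      rw [hcong]
      have e0 : (x + ((0 : ℕ) : ℝ)) ^ (-(a + 2)) = x ^ (-(a + 2)) := by norm_num
      rw [e0]
      linarith
  have htele : ∀ N : ℕ, g N - g 0 ≤ c * (x ^ (-(a + 1)) + x ^ (-(a + 1)) / (a + 1)) := by
    intro N
    rw [← Finset.sum_range_sub g N]
    calc ∑ j ∈ Finset.range N, (g (j + 1) - g j)
        ≤ ∑ j ∈ Finset.range N, c * (x + j) ^ (-(a + 2)) :=
          Finset.sum_le_sum fun j _ => hterm j
      _ = c * ∑ j ∈ Finset.range N, (x + j) ^ (-(a + 2)) := by rw [Finset.mul_sum]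
      _ ≤ c * (x ^ (-(a + 1)) + x ^ (-(a + 1)) / (a + 1)) := by
          have h1 := hsum N
          have h2 : (0 : ℝ) ≤ ∑ j ∈ Finset.range N, (x + j) ^ (-(a + 2)) :=
            Finset.sum_nonneg fun j _ => Real.rpow_nonneg (by positivity) _
          nlinarith
  have hg0 : g 0 = deriv V x := by simp [hg]
  have hlim : Tendsto (fun N : ℕ => g N - g 0) atTop (𝓝 (0 - deriv V x)) := by
    rw [hg0]
    apply Tendsto.sub_const
    have h2 : Tendsto (fun N : ℕ => x + (N : ℝ)) atTop atTop :=
      tendsto_atTop_add_const_left atTop x tendsto_natCast_atTop_atTop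
    exact h.decV'.comp h2
  have hfin : 0 - deriv V x ≤ c * (x ^ (-(a + 1)) + x ^ (-(a + 1)) / (a + 1)) :=
    le_of_tendsto hlim (Filter.Eventually.of_forall htele)
  rw [abs_of_nonpos (Vp_nonpos V a h hx0)]
  have he : c * (x ^ (-(a + 1)) + x ^ (-(a + 1)) / (a + 1)) =
      c * (1 + 1 / (a + 1)) * x ^ (-(a + 1)) := by
    field_simp
  linarith [hfin, he ▸ hfin]

private lemma sigma_facts (V : ℝ → ℝ) (a : ℝ) (C : ℝ) (hC : 0 < C) (ha : 1 < a)
    (hb : ∀ x : ℝ, 1 ≤ x → |deriv V x| ≤ C * x ^ (-(a + 1))) (i : ℕ) (hi : 1 ≤ i) :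
    Summable (fun m : ℕ => ((m + 1 : ℕ) : ℝ) * |deriv V ((i + 1 + m : ℕ) : ℝ)|) ∧
      (∑' m : ℕ, ((m + 1 : ℕ) : ℝ) * |deriv V ((i + 1 + m : ℕ) : ℝ)|) ≤
        C / (a - 1) * (i : ℝ) ^ (-(a - 1)) := by
  set F := fun m : ℕ => ((m + 1 : ℕ) : ℝ) * |deriv V ((i + 1 + m : ℕ) : ℝ)| with hF
  have hnn : ∀ m, 0 ≤ F m := fun m => by positivity
  have hipos : (0 : ℝ) < (i : ℝ) := by exact_mod_cast hi
  have hkey : ∀ N : ℕ, ∑ m ∈ Finset.range N, F m ≤ C / (a - 1) * (i : ℝ) ^ (-(a - 1)) := by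
    intro N
    have h1 : ∀ m ∈ Finset.range N, F m ≤ C * ((i : ℝ) + m + 1) ^ (-(a - 1 + 1)) := by
      intro m _
      set y : ℝ := ((i + 1 + m : ℕ) : ℝ) with hy
      have hye : y = (i : ℝ) + m + 1 := by rw [hy]; push_cast; ring
      have hy1 : (1 : ℝ) ≤ y := by
        rw [hye]
        linarith [hipos, (Nat.cast_nonneg m : (0 : ℝ) ≤ (m : ℝ))]
      have hy0 : (0 : ℝ) < y := lt_of_lt_of_le one_pos hy1
      have hVb := hb y hy1
      have hm : ((m + 1 : ℕ) : ℝ) ≤ y := by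
        rw [hye]; push_cast; linarith [hipos]
      have hstep : ((m + 1 : ℕ) : ℝ) * (C * y ^ (-(a + 1))) ≤ C * y ^ (-(a - 1 + 1)) := by
        have hpow : y ^ (-(a + 1)) * y = y ^ (-(a - 1 + 1)) := by
          rw [← Real.rpow_add_one hy0.ne' (-(a + 1))]
          congr 1
          ring
        calc ((m + 1 : ℕ) : ℝ) * (C * y ^ (-(a + 1)))
            = C * (((m + 1 : ℕ) : ℝ) * y ^ (-(a + 1))) := by ring
          _ ≤ C * (y * y ^ (-(a + 1))) := by
              have := mul_le_mul_of_nonneg_right hm (Real.rpow_nonneg hy0.le (-(a + 1)))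
              nlinarith
          _ = C * y ^ (-(a - 1 + 1)) := by rw [mul_comm y, hpow]
      calc F m ≤ ((m + 1 : ℕ) : ℝ) * (C * y ^ (-(a + 1))) := by
            apply mul_le_mul_of_nonneg_left hVb (by positivity)
        _ ≤ C * y ^ (-(a - 1 + 1)) := hstep
        _ = C * ((i : ℝ) + m + 1) ^ (-(a - 1 + 1)) := by rw [hye]
    calc ∑ m ∈ Finset.range N, F m
        ≤ ∑ m ∈ Finset.range N, C * ((i : ℝ) + m + 1) ^ (-(a - 1 + 1)) :=
          Finset.sum_le_sum h1
      _ = C * ∑ m ∈ Finset.range N, ((i : ℝ) + m + 1) ^ (-(a - 1 + 1)) := by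
          rw [Finset.mul_sum]
      _ ≤ C * ((i : ℝ) ^ (-(a - 1)) / (a - 1)) := by
          have := aux_tail (a - 1) (by linarith) hipos N
          nlinarith [Finset.sum_nonneg (fun m (_ : m ∈ Finset.range N) =>
            Real.rpow_nonneg (by positivity : (0 : ℝ) ≤ (i : ℝ) + m + 1) (-(a - 1 + 1)))]
      _ = C / (a - 1) * (i : ℝ) ^ (-(a - 1)) := by ring
  exact ⟨summable_of_sum_range_le hnn hkey, Real.tsum_le_of_sum_range_le hnn hkey⟩

private lemma sigman_nonneg (V : ℝ → ℝ) (n i : ℕ) : 0 ≤ sigman V n i := by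
  rw [sigman]
  split
  · exact Finset.sum_nonneg fun k _ => by positivity
  · exact le_refl 0

private lemma sigmaInf_nonneg (V : ℝ → ℝ) (i : ℕ) : 0 ≤ sigmaInf V i := by
  rw [sigmaInf]
  split
  · exact le_refl 0
  · exact tsum_nonneg fun m => by positivity

private lemma sigman_le (V : ℝ → ℝ) (n i : ℕ) (hi : 1 ≤ i)
    (hsum : Summable (fun m : ℕ => ((m + 1 : ℕ) : ℝ) * |deriv V ((i + 1 + m : ℕ) : ℝ)|)) :
    sigman V n i ≤ sigmaInf V i := by
  have hnn : ∀ m : ℕ, 0 ≤ ((m + 1 : ℕ) : ℝ) * |deriv V ((i + 1 + m : ℕ) : ℝ)| :=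
    fun m => by positivity
  rw [sigmaInf, if_neg (show ¬ i = 0 by omega), sigman]
  split
  case isTrue hcond =>
    rw [← Finset.Ico_add_one_right_eq_Icc, Finset.sum_Ico_eq_sum_range]
    refine le_trans (Finset.sum_le_sum ?_) (Summable.sum_le_tsum _ (fun m _ => hnn m) hsum)
    intro j _
    have hmin : min (i + 1 + j - i) (n + 1 - i - (i + 1 + j)) ≤ j + 1 := by omega
    have hcast : ((min (i + 1 + j - i) (n + 1 - i - (i + 1 + j)) : ℕ) : ℝ) ≤
        ((j + 1 : ℕ) : ℝ) := Nat.cast_le.2 hmin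
    exact mul_le_mul_of_nonneg_right hcast (abs_nonneg _)
  case isFalse =>
    exact tsum_nonneg hnn

open Topology in
private lemma sigman_tendsto (V : ℝ → ℝ) (i : ℕ) (hi : 1 ≤ i)
    (hsum : Summable (fun m : ℕ => ((m + 1 : ℕ) : ℝ) * |deriv V ((i + 1 + m : ℕ) : ℝ)|))
    (hle : ∀ n, sigman V n i ≤ sigmaInf V i) :
    Tendsto (fun n => sigman V n i) atTop (𝓝 (sigmaInf V i)) := by
  set F := fun m : ℕ => ((m + 1 : ℕ) : ℝ) * |deriv V ((i + 1 + m : ℕ) : ℝ)| with hF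
  have hnn : ∀ m, 0 ≤ F m := fun m => by positivity
  have hS : sigmaInf V i = ∑' m, F m := by rw [sigmaInf, if_neg (by omega)]
  rw [Metric.tendsto_atTop]
  intro ε hε
  have hps := hsum.hasSum.tendsto_sum_nat
  rw [Metric.tendsto_atTop] at hps
  obtain ⟨M, hM⟩ := hps ε hε
  have hM' := hM M le_rfl
  rw [Real.dist_eq, abs_sub_lt_iff] at hM'
  refine ⟨2 * i + 2 * M + 2, fun n hn => ?_⟩
  have hlow : ∑ j ∈ Finset.range M, F j ≤ sigman V n i := by
    rw [sigman, if_pos (by omega)]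
    rw [← Finset.Ico_add_one_right_eq_Icc, Finset.sum_Ico_eq_sum_range]
    have hsub : Finset.range M ⊆ Finset.range (n - i + 1 - (i + 1)) :=
      Finset.range_subset_range.2 (by omega)
    refine le_trans (le_of_eq (Finset.sum_congr rfl ?_))
      (Finset.sum_le_sum_of_subset_of_nonneg hsub fun j _ _ => by positivity)
    intro j hj
    rw [Finset.mem_range] at hj
    rw [show min (i + 1 + j - i) (n + 1 - i - (i + 1 + j)) = j + 1 by omega]
  have hub : sigman V n i ≤ sigmaInf V i := hle n
  have hpart : ∑ j ∈ Finset.range M, F j ≤ ∑' m, F m :=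
    Summable.sum_le_tsum _ (fun m _ => hnn m) hsum
  rw [Real.dist_eq, hS, abs_sub_lt_iff]
  have hub' : sigman V n i ≤ ∑' m, F m := hS ▸ hub
  constructor
  · linarith
  · linarith [hM'.2]

/-- for a > 3/2, σ^∞ ∈ ℓ²(ℕ), 0 ≤ σ^n(i) ≤ σ^∞(i) for all n ≥ 2
and i ≥ 1, and σ^n → σ^∞ in ℓ²(ℕ). -/
theorem statement6 (V : ℝ → ℝ) (a : ℝ) (h : BasicAssumptions V a)
    (ha : 3 / 2 < a) :
    Summable (fun i : ℕ => sigmaInf V i ^ 2) ∧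
    (∀ n : ℕ, 2 ≤ n → ∀ i : ℕ, 1 ≤ i →
      0 ≤ sigman V n i ∧ sigman V n i ≤ sigmaInf V i) ∧
    Filter.Tendsto (fun n : ℕ => ∑' i : ℕ, (sigmaInf V i - sigman V n i) ^ 2)
      Filter.atTop (nhds 0) := by
  obtain ⟨C, hC, hb⟩ := Vp_bound V a h
  have ha1 : 1 < a := h.one_lt_a
  set D : ℝ := C / (a - 1) with hD
  have hDpos : 0 < D := by
    rw [hD]
    have : 0 < a - 1 := by linarith
    positivity
  have hfacts : ∀ i : ℕ, 1 ≤ i →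
      Summable (fun m : ℕ => ((m + 1 : ℕ) : ℝ) * |deriv V ((i + 1 + m : ℕ) : ℝ)|) ∧
      (∑' m : ℕ, ((m + 1 : ℕ) : ℝ) * |deriv V ((i + 1 + m : ℕ) : ℝ)|) ≤
        D * (i : ℝ) ^ (-(a - 1)) :=
    fun i hi => sigma_facts V a C hC ha1 hb i hi
  have h0 : sigmaInf V 0 = 0 := by rw [sigmaInf, if_pos rfl]
  have hn0 : ∀ n, sigman V n 0 = 0 := fun n => by rw [sigman, if_neg (by omega)]
  have hle : ∀ n i, sigman V n i ≤ sigmaInf V i := by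
    intro n i
    rcases Nat.eq_zero_or_pos i with rfl | hi
    · rw [hn0]
      exact sigmaInf_nonneg V 0
    · exact sigman_le V n i hi (hfacts i hi).1
  have hsumbound : Summable (fun i : ℕ => D ^ 2 * ((i : ℝ) ^ (-(a - 1))) ^ 2) := by
    apply Summable.mul_left
    have hexp : -(a - 1) * 2 < -1 := by linarith
    apply (Real.summable_nat_rpow.2 hexp).congr
    intro i
    rw [Real.rpow_mul (Nat.cast_nonneg i), ← Real.rpow_natCast ((i : ℝ) ^ (-(a - 1))) 2]
    norm_num
  have hsq : Summable (fun i : ℕ => sigmaInf V i ^ 2) := by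
    refine Summable.of_nonneg_of_le (fun i => sq_nonneg _) (fun i => ?_) hsumbound
    rcases Nat.eq_zero_or_pos i with rfl | hi
    · rw [h0, show (0 : ℝ) ^ 2 = 0 by norm_num]
      positivity
    · have h2 : sigmaInf V i ≤ D * (i : ℝ) ^ (-(a - 1)) := by
        rw [sigmaInf, if_neg (by omega)]
        exact (hfacts i hi).2
      calc sigmaInf V i ^ 2 ≤ (D * (i : ℝ) ^ (-(a - 1))) ^ 2 :=
          pow_le_pow_left₀ (sigmaInf_nonneg V i) h2 2
        _ = D ^ 2 * ((i : ℝ) ^ (-(a - 1))) ^ 2 := by ring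
  refine ⟨hsq, fun n _ i hi => ⟨sigman_nonneg V n i, hle n i⟩, ?_⟩
  have hpt : ∀ i : ℕ, Tendsto (fun n => sigman V n i) atTop (nhds (sigmaInf V i)) := by
    intro i
    rcases Nat.eq_zero_or_pos i with rfl | hi
    · simp only [hn0, h0]
      exact tendsto_const_nhds
    · exact sigman_tendsto V i hi (hfacts i hi).1 (fun n => hle n i)
  have hmain := tendsto_tsum_of_dominated_convergence
      (f := fun (n : ℕ) (i : ℕ) => (sigmaInf V i - sigman V n i) ^ 2)
      (g := fun _ : ℕ => (0 : ℝ)) (bound := fun i => sigmaInf V i ^ 2) hsq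
      (fun i => by
        have h1 : Tendsto (fun n => sigmaInf V i - sigman V n i) atTop (nhds 0) := by
          have := tendsto_const_nhds (x := sigmaInf V i) (f := atTop (α := ℕ)) |>.sub (hpt i)
          simpa using this
        simpa using h1.pow 2)
      (Filter.Eventually.of_forall fun n => by
        intro i
        rw [Real.norm_eq_abs, abs_of_nonneg (sq_nonneg _)]
        have h1 : 0 ≤ sigmaInf V i - sigman V n i := sub_nonneg.2 (hle n i)
        have h2 : sigmaInf V i - sigman V n i ≤ sigmaInf V i := by
          linarith [sigman_nonneg V n i]
        exact sq_le_sq' (by linarith [sigmaInf_nonneg V i]) h2)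
  simpa using hmain
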